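/- arXiv:2207.13637 — 3 statements merged into one kernel-verified Lean document; each statement's English description precedes it below -/
import Mathlib

section
/- For n ≥ 2, the stabilizer of a point in the natural action of the symmetric group S_n on {1,…,n} is a maximal subgroup of S_n. -/
/-- For `n ≥ 2`, the stabilizer of a point in the natural action of the symmetric
group `S_n` on `{1, …, n}` is a maximal (proper) subgroup of `S_n`. -/
theorem stmt_1 (n : ℕ) (hn : 2 ≤ n) (a : Fin n) :
    IsCoatom (MulAction.stabilizer (Equiv.Perm (Fin n)) a) := by
  have hcard : 1 < Fintype.card (Fin n) := by rw [Fintype.card_fin]; omega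
  obtain ⟨c, hc⟩ := Fintype.exists_ne_of_one_lt_card hcard a
  constructor
  · intro htop
    have : Equiv.swap a c ∈ MulAction.stabilizer (Equiv.Perm (Fin n)) a := by
      rw [htop]; trivial
    rw [MulAction.mem_stabilizer_iff] at this
    simp [Equiv.Perm.smul_def, Equiv.swap_apply_left] at this
    exact hc this
  · intro K hK
    obtain ⟨g, hgK, hgs⟩ := SetLike.exists_of_lt hK
    rw [MulAction.mem_stabilizer_iff] at hgs
    set b := g • a with hb
    have hba : b ≠ a := hgs
    -- swap a b ∈ K
    have hswab : Equiv.swap a b ∈ K := by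
      have hmem : g⁻¹ * Equiv.swap a b ∈ MulAction.stabilizer (Equiv.Perm (Fin n)) a := by
        rw [MulAction.mem_stabilizer_iff]
        simp [Equiv.Perm.smul_def, Equiv.swap_apply_left, hb]
      have := hK.le hmem
      have := K.mul_mem hgK this
      simpa using this
    -- all swaps a y (y ≠ a) in K
    have key : ∀ y : Fin n, y ≠ a → Equiv.swap a y ∈ K := by
      intro y hy
      rcases eq_or_ne y b with rfl | hyb
      · exact hswab
      · have hstab : Equiv.swap b y ∈ MulAction.stabilizer (Equiv.Perm (Fin n)) a := by
          rw [MulAction.mem_stabilizer_iff]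
          simp [Equiv.Perm.smul_def, Equiv.swap_apply_of_ne_of_ne hba.symm (Ne.symm hy)]
        have hby : Equiv.swap b y ∈ K := hK.le hstab
        have : Equiv.swap b y * Equiv.swap a b * (Equiv.swap b y)⁻¹ ∈ K :=
          K.mul_mem (K.mul_mem hby hswab) (K.inv_mem hby)
        have hconj : Equiv.swap b y * Equiv.swap a b * (Equiv.swap b y)⁻¹ = Equiv.swap a y := by
          rw [← Equiv.swap_apply_apply]
          rw [Equiv.swap_apply_left, Equiv.swap_apply_of_ne_of_ne hba.symm (Ne.symm hy)]
        rwa [hconj] at this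
    -- every swap is in K
    rw [eq_top_iff, ← Equiv.Perm.closure_isSwap, Subgroup.closure_le]
    rintro σ ⟨x, y, hxy, rfl⟩
    rcases eq_or_ne x a with rfl | hxa
    · exact key y (fun h => hxy h.symm)
    rcases eq_or_ne y a with rfl | hya
    · rw [Equiv.swap_comm]; exact key x hxa
    · exact hK.le (by
        rw [MulAction.mem_stabilizer_iff]
        simp [Equiv.Perm.smul_def, Equiv.swap_apply_of_ne_of_ne (Ne.symm hxa) (Ne.symm hya)])
end

section
/- Let k ⊆ L ⊆ M be fields with M/k a finite Galois extension, and let x be a closed point datum given by an intermediate field L with [L : k] = n such that Gal(M/k) acting on the n embeddings of L into M is the full symmetric group. If k' / k is any subextension of L/k, then [k' : k] ∈ {1, n}. -/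
/-- The stabilizer of a point is a maximal subgroup of the full permutation group. -/
lemma stab_max {X : Type*} (ι : X) (S : Subgroup (Equiv.Perm X))
    (hS : MulAction.stabilizer (Equiv.Perm X) ι ≤ S) :
    S = MulAction.stabilizer (Equiv.Perm X) ι ∨ S = ⊤ := by
  classical
  by_cases h : S ≤ MulAction.stabilizer (Equiv.Perm X) ι
  · exact Or.inl (le_antisymm h hS)
  · right
    rw [SetLike.le_def] at h
    push_neg at h
    obtain ⟨h0, hh0S, hh0⟩ := h
    rw [MulAction.mem_stabilizer_iff, Equiv.Perm.smul_def] at hh0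
    apply top_unique
    intro g _
    by_cases hg : g ι = ι
    · exact hS (by rwa [MulAction.mem_stabilizer_iff, Equiv.Perm.smul_def])
    · set s : Equiv.Perm X := Equiv.swap (h0 ι) (g ι) with hs
      have hsS : s ∈ S := hS (by
        rw [MulAction.mem_stabilizer_iff, Equiv.Perm.smul_def, hs]
        exact Equiv.swap_apply_of_ne_of_ne (fun hc => hh0 hc.symm) (fun hc => hg hc.symm))
      have hsh : (s * h0) ι = g ι := by
        simp [hs, Equiv.Perm.mul_apply, Equiv.swap_apply_left]
      have hmem : (s * h0)⁻¹ * g ∈ MulAction.stabilizer (Equiv.Perm X) ι := by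
        rw [MulAction.mem_stabilizer_iff, Equiv.Perm.smul_def, Equiv.Perm.mul_apply, ← hsh,
          Equiv.Perm.inv_def, Equiv.symm_apply_apply]
      have : (s * h0) * ((s * h0)⁻¹ * g) ∈ S :=
        S.mul_mem (S.mul_mem hsS hh0S) (hS hmem)
      simpa [mul_assoc] using this

/-- Let `k ⊆ L ⊆ M` with `M/k` finite Galois, `L` of degree `n ≥ 2` over `k` with
Galois closure `M`, such that `Gal(M/k)` acts on the `n` embeddings of `L` into `M`
as the full symmetric group. Then every subextension `k'` of `L/k` has degree `1`
or `n` over `k`. -/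
theorem stmt_9 (k M : Type*) [Field k] [Field M] [Algebra k M]
    [FiniteDimensional k M] [IsGalois k M]
    (L : IntermediateField k M) (hclosure : IntermediateField.normalClosure k L M = ⊤)
    (n : ℕ) (hn : Module.finrank k L = n) (hn2 : 2 ≤ n)
    (e : (M ≃ₐ[k] M) ≃* Equiv.Perm (L →ₐ[k] M))
    (hcompat : ∀ (σ : M ≃ₐ[k] M) (f : L →ₐ[k] M),
      e σ f = σ.toAlgHom.comp f)
    (k' : IntermediateField k M) (hk' : k' ≤ L) :
    Module.finrank k k' = 1 ∨ Module.finrank k k' = n := by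
  classical
  set ι : L →ₐ[k] M := L.val with hι
  -- key equivalence: `e σ` fixes `ι` iff `σ` fixes `L` pointwise
  have key : ∀ σ : M ≃ₐ[k] M, e σ ι = ι ↔ ∀ x : M, x ∈ L → σ x = x := by
    intro σ
    rw [hcompat σ ι]
    constructor
    · intro hcomp x hx
      have := congrFun (congrArg (fun f : L →ₐ[k] M => (f : L → M)) hcomp) ⟨x, hx⟩
      simpa [hι] using this
    · intro hfix
      ext y
      simpa [hι] using hfix y y.2
  set S : Subgroup (Equiv.Perm (L →ₐ[k] M)) :=
    (IntermediateField.fixingSubgroup k').map e.toMonoidHom with hSdef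
  have hStabS : MulAction.stabilizer (Equiv.Perm (L →ₐ[k] M)) ι ≤ S := by
    intro p hp
    rw [MulAction.mem_stabilizer_iff, Equiv.Perm.smul_def] at hp
    refine ⟨e.symm p, ?_, by simp⟩
    rw [SetLike.mem_coe, IntermediateField.mem_fixingSubgroup_iff]
    intro x hx
    exact ((key (e.symm p)).mp (by simpa using hp)) x (hk' hx)
  rcases stab_max ι S hStabS with hcase | hcase
  · -- S = stabilizer ⇒ k' = L
    right
    have hsub : IntermediateField.fixingSubgroup k' ≤ IntermediateField.fixingSubgroup L := by
      intro σ hσ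
      have : e σ ∈ S := ⟨σ, hσ, rfl⟩
      rw [hcase, MulAction.mem_stabilizer_iff, Equiv.Perm.smul_def] at this
      rw [IntermediateField.mem_fixingSubgroup_iff]
      exact (key σ).mp this
    have hsup : IntermediateField.fixingSubgroup L ≤ IntermediateField.fixingSubgroup k' :=
      IntermediateField.fixingSubgroup_le hk'
    have heq : IntermediateField.fixingSubgroup k' = IntermediateField.fixingSubgroup L :=
      le_antisymm hsub hsup
    have : k' = L := by
      have h1 := IsGalois.fixedField_fixingSubgroup k'
      have h2 := IsGalois.fixedField_fixingSubgroup L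
      rw [← h1, ← h2, heq]
    rw [this, hn]
  · -- S = ⊤ ⇒ k' = ⊥
    left
    have htop : IntermediateField.fixingSubgroup k' = ⊤ := by
      apply top_unique
      intro σ _
      have : e σ ∈ S := by rw [hcase]; trivial
      obtain ⟨τ, hτ, hτσ⟩ := this
      have : τ = σ := e.injective hτσ
      rwa [← this]
    have : k' = ⊥ := by
      have h1 := IsGalois.fixedField_fixingSubgroup k'
      have h2 := IsGalois.fixedField_fixingSubgroup (⊥ : IntermediateField k M)
      rw [IntermediateField.fixingSubgroup_bot] at h2
      rw [← h1, ← h2, htop]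
    rw [this, IntermediateField.finrank_bot]
end

section
/- Suppose p : E → B is a covering map (finite covering space) of topological spaces, B is path-connected, and f : B' → B is a continuous map from a path-connected space B' such that the induced map π₁(B', b') → π₁(B, b) is surjective. If E is path-connected, then the pullback covering f*E → B' is also path-connected. -/
open CategoryTheory
open scoped FundamentalGroupoid

namespace Stmt16Aux

open Set unitInterval

/-- Pasting lemma: glue continuous functions on two closed sets. -/
theorem paste {X Y : Type*} [TopologicalSpace X] [TopologicalSpace Y]
    {A C : Set X} (hA : IsClosed A) (hC : IsClosed C) {g h : X → Y}
    [∀ x, Decidable (x ∈ A)] (hg : ContinuousOn g A) (hh : ContinuousOn h C) (he : EqOn g h (A ∩ C)) :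
    ContinuousOn (fun x => if x ∈ A then g x else h x) (A ∪ C) := by
  classical
  intro x hx
  set f := fun x => if x ∈ A then g x else h x with hf
  have hfA : EqOn f g A := fun y hy => if_pos hy
  have hfC : EqOn f h C := by
    intro y hy
    by_cases hyA : y ∈ A
    · simpa [f, hyA] using he ⟨hyA, hy⟩
    · simp [f, hyA]
  have h1 : ContinuousWithinAt f A x := by
    by_cases hxA : x ∈ A
    · exact (hg x hxA).congr hfA (hfA hxA)
    · exact continuousWithinAt_of_notMem_closure (by rwa [hA.closure_eq])
  have h2 : ContinuousWithinAt f C x := by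
    by_cases hxC : x ∈ C
    · exact (hh x hxC).congr hfC (hfC hxC)
    · exact continuousWithinAt_of_notMem_closure (by rwa [hC.closure_eq])
  exact h1.union h2

variable {E B : Type*} [TopologicalSpace E] [TopologicalSpace B] {p : E → B}

/-- A set `U ⊆ B` is good if through every point of `E` above `U` there is a
continuous section of `p` defined on `U`. -/
def GoodSet (p : E → B) (U : Set B) : Prop :=
  ∀ x₀ : E, p x₀ ∈ U → ∃ s : B → E, ContinuousOn s U ∧ (∀ c ∈ U, p (s c) = c) ∧ s (p x₀) = x₀

def baseU (hp : IsCoveringMap p) (b : B) : Set B := (hp b).2.choose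

theorem baseU_open (hp : IsCoveringMap p) (b : B) : IsOpen (baseU hp b) :=
  (hp b).2.choose_spec.2.1

theorem mem_baseU (hp : IsCoveringMap p) (b : B) : b ∈ baseU hp b :=
  (hp b).2.choose_spec.1

theorem goodSet_baseSet (hp : IsCoveringMap p) (b : B) :
    GoodSet p (baseU hp b) := by
  intro x₀ hx₀
  haveI : Nonempty (p ⁻¹' {b}) := ⟨((hp b).2.choose_spec.2.2.2.choose ⟨x₀, hx₀⟩).2⟩
  rw [show baseU hp b = (hp b).toTrivialization.baseSet from rfl] at hx₀ ⊢
  set T := (hp b).toTrivialization with hT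
  refine ⟨fun c => T.toOpenPartialHomeomorph.symm (c, (T x₀).2), ?_, ?_, ?_⟩
  · exact T.toOpenPartialHomeomorph.continuousOn_symm.comp
      (continuous_id.prodMk continuous_const).continuousOn
      (fun c hc => T.mem_target.mpr hc)
  · intro c hc
    exact T.proj_symm_apply (T.mem_target.mpr hc)
  · exact T.symm_apply_mk_proj (T.mem_source.mpr hx₀)

theorem GoodSet.mono {U V : Set B} (h : GoodSet p U) (hVU : V ⊆ U) : GoodSet p V :=
  fun x₀ hx₀ =>
    let ⟨s, hsc, hsp, hsx⟩ := h x₀ (hVU hx₀)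
    ⟨s, hsc.mono hVU, fun c hc => hsp c (hVU hc), hsx⟩

/-- Extension step: extend a partial lift on a closed set `D` across a closed set `Q`
mapping into a good set, provided `D ∩ Q` is preconnected and nonempty. -/
theorem step (hp : IsCoveringMap p) {X : Type*} [TopologicalSpace X] {H : X → B}
    (hH : Continuous H) {D Q : Set X} (hD : IsClosed D) (hQ : IsClosed Q)
    (hDQ : IsPreconnected (D ∩ Q)) {z : X} (hz : z ∈ D ∩ Q)
    {U : Set B} (hU : GoodSet p U) (hQU : MapsTo H Q U)
    {Γ : X → E} (hΓc : ContinuousOn Γ D) (hΓl : EqOn (p ∘ Γ) H D) :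
    ∃ Γ' : X → E, ContinuousOn Γ' (D ∪ Q) ∧ EqOn (p ∘ Γ') H (D ∪ Q) ∧ EqOn Γ' Γ D := by
  classical
  have hpz : p (Γ z) ∈ U := by
    have := hΓl hz.1
    simp only [Function.comp_apply] at this
    rw [this]; exact hQU hz.2
  obtain ⟨s, hsc, hsp, hsz⟩ := hU (Γ z) hpz
  have hcomp : ContinuousOn (s ∘ H) Q := hsc.comp hH.continuousOn hQU
  have heq : EqOn Γ (s ∘ H) (D ∩ Q) := by
    refine hp.eqOn_of_comp_eqOn hDQ (hΓc.mono inter_subset_left)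
      (hcomp.mono inter_subset_right) ?_ hz ?_
    · intro y hy
      show p (Γ y) = p (s (H y))
      have h1 := hΓl hy.1
      simp only [Function.comp_apply] at h1
      rw [h1, hsp _ (hQU hy.2)]
    · show Γ z = s (H z)
      have h1 := hΓl hz.1
      simp only [Function.comp_apply] at h1
      rw [← h1, hsz]
  refine ⟨fun x => if x ∈ D then Γ x else s (H x),
    paste hD hQ hΓc hcomp heq, ?_, fun y hy => if_pos hy⟩
  intro y hy
  by_cases hyD : y ∈ D
  · simp only [Function.comp_apply, if_pos hyD]
    exact hΓl hyD
  · have hyQ : y ∈ Q := hy.resolve_left hyD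
    simp only [Function.comp_apply, if_neg hyD]
    exact hsp _ (hQU hyQ)

theorem square_lift (hp : IsCoveringMap p) {H : ℝ × ℝ → B} (hH : Continuous H)
    (e : E) (he : p e = H (0, 0)) :
    ∃ Γ : ℝ × ℝ → E, ContinuousOn Γ (Icc 0 1 ×ˢ Icc 0 1) ∧
      EqOn (p ∘ Γ) H (Icc 0 1 ×ˢ Icc 0 1) ∧ Γ (0, 0) = e := by
  obtain ⟨δ, hδ, hball⟩ := lebesgue_number_lemma_of_metric
    ((isCompact_Icc.prod isCompact_Icc) : IsCompact ((Icc (0:ℝ) 1) ×ˢ Icc (0:ℝ) 1))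
    (fun b : B => (baseU_open hp b).preimage hH)
    (fun x _ => mem_iUnion.mpr ⟨H x, mem_baseU hp (H x)⟩)
  obtain ⟨n', hn'⟩ := exists_nat_one_div_lt hδ
  set n : ℕ := n' + 1 with hn
  have hnpos : (0:ℝ) < n := by positivity
  set c : ℕ → ℝ := fun k => (k : ℝ) / n with hc
  have hc0 : c 0 = 0 := by simp [hc]
  have hcn : c n = 1 := by simp only [hc]; exact div_self hnpos.ne'
  have hcnonneg : ∀ k, 0 ≤ c k := fun k => by positivity
  have hcstep : ∀ k : ℕ, c (k + 1) = c k + 1 / n := fun k => by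
    simp only [hc]; push_cast; ring
  have hcmono : ∀ k, c k ≤ c (k + 1) := fun k => by
    rw [hcstep k]; have : (0:ℝ) ≤ 1 / n := by positivity
    linarith
  have hcle1 : ∀ k, k ≤ n → c k ≤ 1 := fun k hk => by
    rw [hc, div_le_one hnpos]; exact_mod_cast hk
  have hδn : 1 / (n:ℝ) < δ := by
    rw [hn]; push_cast; exact_mod_cast hn'
  -- each cell maps into a good set
  have hcell : ∀ i j : ℕ, i < n → j < n →
      ∃ U : Set B, GoodSet p U ∧
        MapsTo H (Icc (c i) (c (i+1)) ×ˢ Icc (c j) (c (j+1))) U := by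
    intro i j hi hj
    have hmem : ((c i, c j) : ℝ × ℝ) ∈ Icc (0:ℝ) 1 ×ˢ Icc (0:ℝ) 1 :=
      ⟨⟨hcnonneg i, hcle1 i hi.le⟩, ⟨hcnonneg j, hcle1 j hj.le⟩⟩
    obtain ⟨b, hb⟩ := hball _ hmem
    refine ⟨_, goodSet_baseSet hp b, fun x hx => hb ?_⟩
    rw [Metric.mem_ball]
    have h1 : dist x.1 (c i) ≤ 1 / n := by
      rw [Real.dist_eq, abs_le]
      have e1 := hx.1.1; have e2 := hx.1.2
      rw [hcstep i] at e2
      constructor <;> linarith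
    have h2 : dist x.2 (c j) ≤ 1 / n := by
      rw [Real.dist_eq, abs_le]
      have e1 := hx.2.1; have e2 := hx.2.2
      rw [hcstep j] at e2
      constructor <;> linarith
    calc dist x ((c i, c j) : ℝ × ℝ) = max (dist x.1 (c i)) (dist x.2 (c j)) := Prod.dist_eq
      _ ≤ 1 / n := max_le h1 h2
      _ < δ := hδn
  have hnpos' : 0 < n := Nat.succ_pos n'
  -- bottom edge
  have bottom : ∀ i, i ≤ n → ∃ Γ : ℝ × ℝ → E,
      ContinuousOn Γ (Icc 0 (c i) ×ˢ Icc 0 0) ∧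
      EqOn (p ∘ Γ) H (Icc 0 (c i) ×ˢ Icc 0 0) ∧ Γ (0, 0) = e := by
    intro i hi
    induction i with
    | zero =>
      refine ⟨fun _ => e, continuousOn_const, ?_, rfl⟩
      intro y hy
      rw [hc0] at hy
      have h1 : y = ((0 : ℝ), (0 : ℝ)) := by
        have a1 := hy.1.1; have a2 := hy.1.2; have b1 := hy.2.1; have b2 := hy.2.2
        have : y.1 = 0 := le_antisymm a2 a1
        have : y.2 = 0 := le_antisymm b2 b1
        exact Prod.ext ‹y.1 = 0› ‹y.2 = 0›
      simp only [Function.comp_apply, h1]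
      exact he
    | succ i ih =>
      have hi' : i < n := Nat.lt_of_succ_le hi
      obtain ⟨Γ, hΓc, hΓl, hΓe⟩ := ih (Nat.le_of_succ_le hi)
      obtain ⟨U, hU, hQU⟩ := hcell i 0 hi' hnpos'
      have hQU' : MapsTo H (Icc (c i) (c (i+1)) ×ˢ Icc (0:ℝ) 0) U :=
        hQU.mono_left (prod_mono_right (Icc_subset_Icc hc0.le (hcnonneg 1)))
      have hz : ((c i, (0:ℝ)) : ℝ × ℝ) ∈
          (Icc 0 (c i) ×ˢ Icc (0:ℝ) 0) ∩ (Icc (c i) (c (i+1)) ×ˢ Icc (0:ℝ) 0) :=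
        ⟨⟨⟨hcnonneg i, le_rfl⟩, ⟨le_rfl, le_rfl⟩⟩, ⟨⟨le_rfl, hcmono i⟩, ⟨le_rfl, le_rfl⟩⟩⟩
      have hconn : IsPreconnected ((Icc 0 (c i) ×ˢ Icc (0:ℝ) 0) ∩
          (Icc (c i) (c (i+1)) ×ˢ Icc (0:ℝ) 0)) := by
        simp only [prod_inter_prod, Icc_inter_Icc]
        exact isPreconnected_Icc.prod isPreconnected_Icc
      obtain ⟨Γ', h1, h2, h3⟩ := step hp hH (isClosed_Icc.prod isClosed_Icc)
        (isClosed_Icc.prod isClosed_Icc) hconn hz hU hQU' hΓc hΓl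
      have hdom : Icc 0 (c i) ×ˢ Icc (0:ℝ) 0 ∪ Icc (c i) (c (i+1)) ×ˢ Icc (0:ℝ) 0
          = Icc 0 (c (i+1)) ×ˢ Icc (0:ℝ) 0 := by
        rw [← union_prod, Icc_union_Icc_eq_Icc (hcnonneg i) (hcmono i)]
      rw [hdom] at h1 h2
      exact ⟨Γ', h1, h2, by rw [h3 ⟨⟨le_rfl, hcnonneg i⟩, ⟨le_rfl, le_rfl⟩⟩]; exact hΓe⟩
  -- rows
  have outer : ∀ j, j ≤ n → ∃ Γ : ℝ × ℝ → E,
      ContinuousOn Γ (Icc 0 1 ×ˢ Icc 0 (c j)) ∧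
      EqOn (p ∘ Γ) H (Icc 0 1 ×ˢ Icc 0 (c j)) ∧ Γ (0, 0) = e := by
    intro j hj
    induction j with
    | zero =>
      obtain ⟨Γ, h1, h2, h3⟩ := bottom n le_rfl
      rw [hcn] at h1 h2
      rw [hc0]
      exact ⟨Γ, h1, h2, h3⟩
    | succ j ih =>
      have hj' : j < n := Nat.lt_of_succ_le hj
      obtain ⟨Γb, hbc, hbl, hbe⟩ := ih (Nat.le_of_succ_le hj)
      -- inner induction along the row
      have inner : ∀ i, i ≤ n → ∃ Γ : ℝ × ℝ → E,
          ContinuousOn Γ ((Icc 0 1 ×ˢ Icc 0 (c j)) ∪ (Icc 0 (c i) ×ˢ Icc (c j) (c (j+1)))) ∧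
          EqOn (p ∘ Γ) H ((Icc 0 1 ×ˢ Icc 0 (c j)) ∪ (Icc 0 (c i) ×ˢ Icc (c j) (c (j+1)))) ∧
          Γ (0, 0) = e := by
        intro i hi
        induction i with
        | zero =>
          obtain ⟨U, hU, hQU⟩ := hcell 0 j hnpos' hj'
          have hQU' : MapsTo H (Icc 0 (c 0) ×ˢ Icc (c j) (c (j+1))) U :=
            hQU.mono_left (prod_mono_left (Icc_subset_Icc hc0.le (hcmono 0)))
          have hz : ((0, c j) : ℝ × ℝ) ∈
              (Icc 0 1 ×ˢ Icc 0 (c j)) ∩ (Icc 0 (c 0) ×ˢ Icc (c j) (c (j+1))) :=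
            ⟨⟨⟨le_rfl, zero_le_one⟩, ⟨hcnonneg j, le_rfl⟩⟩,
             ⟨⟨le_rfl, hcnonneg 0⟩, ⟨le_rfl, hcmono j⟩⟩⟩
          have hconn : IsPreconnected ((Icc 0 1 ×ˢ Icc 0 (c j)) ∩
              (Icc 0 (c 0) ×ˢ Icc (c j) (c (j+1)))) := by
            simp only [prod_inter_prod, Icc_inter_Icc]
            exact isPreconnected_Icc.prod isPreconnected_Icc
          obtain ⟨Γ', h1, h2, h3⟩ := step hp hH
            (isClosed_Icc.prod isClosed_Icc) (isClosed_Icc.prod isClosed_Icc)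
            hconn hz hU hQU' hbc hbl
          exact ⟨Γ', h1, h2, by
            rw [h3 ⟨⟨le_rfl, zero_le_one⟩, ⟨le_rfl, hcnonneg j⟩⟩]; exact hbe⟩
        | succ i ih2 =>
          have hi' : i < n := Nat.lt_of_succ_le hi
          obtain ⟨Γ, hΓc, hΓl, hΓe⟩ := ih2 (Nat.le_of_succ_le hi)
          obtain ⟨U, hU, hQU⟩ := hcell i j hi' hj'
          set D : Set (ℝ × ℝ) := (Icc 0 1 ×ˢ Icc 0 (c j)) ∪ (Icc 0 (c i) ×ˢ Icc (c j) (c (j+1))) with hD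
          set Q : Set (ℝ × ℝ) := Icc (c i) (c (i+1)) ×ˢ Icc (c j) (c (j+1)) with hQ
          have hz : ((c i, c j) : ℝ × ℝ) ∈ D ∩ Q :=
            ⟨Or.inl ⟨⟨hcnonneg i, hcle1 i hi'.le⟩, ⟨hcnonneg j, le_rfl⟩⟩,
             ⟨⟨le_rfl, hcmono i⟩, ⟨le_rfl, hcmono j⟩⟩⟩
          have hm1 : ((c i, c j) : ℝ × ℝ) ∈ (Icc 0 1 ×ˢ Icc 0 (c j)) ∩ Q :=
            ⟨⟨⟨hcnonneg i, hcle1 i hi'.le⟩, ⟨hcnonneg j, le_rfl⟩⟩,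
             ⟨⟨le_rfl, hcmono i⟩, ⟨le_rfl, hcmono j⟩⟩⟩
          have hm2 : ((c i, c j) : ℝ × ℝ) ∈ (Icc 0 (c i) ×ˢ Icc (c j) (c (j+1))) ∩ Q :=
            ⟨⟨⟨hcnonneg i, le_rfl⟩, ⟨le_rfl, hcmono j⟩⟩,
             ⟨⟨le_rfl, hcmono i⟩, ⟨le_rfl, hcmono j⟩⟩⟩
          have hP1 : IsPreconnected ((Icc 0 1 ×ˢ Icc 0 (c j)) ∩ Q) := by
            simp only [hQ, prod_inter_prod, Icc_inter_Icc]
            exact isPreconnected_Icc.prod isPreconnected_Icc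
          have hP2 : IsPreconnected ((Icc 0 (c i) ×ˢ Icc (c j) (c (j+1))) ∩ Q) := by
            simp only [hQ, prod_inter_prod, Icc_inter_Icc]
            exact isPreconnected_Icc.prod isPreconnected_Icc
          have hconn : IsPreconnected (D ∩ Q) := by
            rw [hD, union_inter_distrib_right]
            exact IsPreconnected.union ((c i, c j) : ℝ × ℝ) hm1 hm2 hP1 hP2
          have hDc : IsClosed D :=
            (isClosed_Icc.prod isClosed_Icc).union (isClosed_Icc.prod isClosed_Icc)
          obtain ⟨Γ', h1, h2, h3⟩ := step hp hH hDc (isClosed_Icc.prod isClosed_Icc)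
            hconn hz hU hQU hΓc hΓl
          have hdom : D ∪ Q =
              (Icc 0 1 ×ˢ Icc 0 (c j)) ∪ (Icc 0 (c (i+1)) ×ˢ Icc (c j) (c (j+1))) := by
            rw [hD, hQ, union_assoc, ← union_prod,
              Icc_union_Icc_eq_Icc (hcnonneg i) (hcmono i)]
          rw [hdom] at h1 h2
          exact ⟨Γ', h1, h2, by
            rw [h3 (Or.inl ⟨⟨le_rfl, zero_le_one⟩, ⟨le_rfl, hcnonneg j⟩⟩)]; exact hΓe⟩
      obtain ⟨Γ, h1, h2, h3⟩ := inner n le_rfl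
      have hdom : (Icc 0 1 ×ˢ Icc 0 (c j)) ∪ (Icc 0 (c n) ×ˢ Icc (c j) (c (j+1)))
          = Icc 0 1 ×ˢ Icc 0 (c (j+1)) := by
        rw [hcn, ← prod_union, Icc_union_Icc_eq_Icc (hcnonneg j) (hcmono j)]
      rw [hdom] at h1 h2
      exact ⟨Γ, h1, h2, h3⟩
  obtain ⟨Γ, h1, h2, h3⟩ := outer n le_rfl
  rw [hcn] at h1 h2
  exact ⟨Γ, h1, h2, h3⟩

theorem path_lift (hp : IsCoveringMap p) {x y : B} (γ : Path x y) (e : E) (he : p e = x) :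
    ∃ Γ : I → E, Continuous Γ ∧ (∀ t, p (Γ t) = γ t) ∧ Γ 0 = e := by
  have hH : Continuous (fun z : ℝ × ℝ => γ.extend z.2) :=
    γ.continuous_extend.comp continuous_snd
  obtain ⟨Γ, h1, h2, h3⟩ := square_lift hp hH e (by simpa using he)
  refine ⟨fun t => Γ (0, (t : ℝ)), ?_, ?_, ?_⟩
  · exact h1.comp_continuous (continuous_const.prodMk continuous_subtype_val)
      (fun t => ⟨⟨le_rfl, zero_le_one⟩, t.2⟩)
  · intro t
    have := h2 (show ((0 : ℝ), (t : ℝ)) ∈ Icc (0:ℝ) 1 ×ˢ Icc (0:ℝ) 1 from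
      ⟨⟨le_rfl, zero_le_one⟩, t.2⟩)
    simpa [Path.extend_extends' γ t] using this
  · simpa using h3

theorem monodromy (hp : IsCoveringMap p) {x y : B} {γ₀ γ₁ : Path x y} (h : γ₀.Homotopic γ₁)
    {Γ₀ Γ₁ : I → E} (h₀c : Continuous Γ₀) (h₁c : Continuous Γ₁)
    (h₀ : ∀ t, p (Γ₀ t) = γ₀ t) (h₁ : ∀ t, p (Γ₁ t) = γ₁ t)
    (hstart : Γ₀ 0 = Γ₁ 0) : Γ₀ 1 = Γ₁ 1 := by
  haveI : PreconnectedSpace I := inferInstance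
  obtain ⟨F⟩ := h
  set prj := fun r : ℝ => projIcc (0:ℝ) 1 zero_le_one r with hprj
  set H : ℝ × ℝ → B := fun z => F (prj z.1, prj z.2) with hHdef
  have hH : Continuous H :=
    F.continuous.comp (((continuous_projIcc.comp continuous_fst)).prodMk
      ((continuous_projIcc.comp continuous_snd)))
  have he : p (Γ₀ 0) = H (0, 0) := by
    have : H (0, 0) = γ₀ 0 := by
      simp only [hHdef, hprj, projIcc_left]
      exact F.apply_zero 0
    rw [this, h₀ 0]
  obtain ⟨Γ, hc, hl, hΓ00⟩ := square_lift hp hH (Γ₀ 0) he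
  have hmem : ∀ t : I, ∀ r ∈ Icc (0:ℝ) 1, ((r, (t:ℝ)) : ℝ × ℝ) ∈ Icc (0:ℝ) 1 ×ˢ Icc (0:ℝ) 1 :=
    fun t r hr => ⟨hr, t.2⟩
  -- left edge agrees with Γ₀
  have hleft : (fun t : I => Γ (0, (t : ℝ))) = Γ₀ := by
    refine hp.eq_of_comp_eq ?_ h₀c ?_ 0 ?_
    · exact hc.comp_continuous (continuous_const.prodMk continuous_subtype_val)
        (fun t => hmem t 0 ⟨le_rfl, zero_le_one⟩)
    · funext t
      have h5 := hl (hmem t 0 ⟨le_rfl, zero_le_one⟩)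
      simp only [Function.comp_apply] at h5 ⊢
      rw [h5, hHdef]
      simp only [hprj, projIcc_left, projIcc_val]
      rw [show (⟨(0:ℝ), _⟩ : I) = (0 : I) from rfl]
      rw [F.apply_zero t]
      exact (h₀ t).symm
    · simpa using hΓ00
  -- bottom and top edges are constant
  have hbotval : ∀ a ∈ (Icc (0:ℝ) 1 ×ˢ Icc (0:ℝ) 0), p (Γ a) = x := by
    intro a ha
    have h2 : a ∈ Icc (0:ℝ) 1 ×ˢ Icc (0:ℝ) 1 := ⟨ha.1, ha.2.1, ha.2.2.trans zero_le_one⟩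
    have h5 := hl h2
    simp only [Function.comp_apply] at h5
    rw [h5, hHdef]
    have ha2 : a.2 = 0 := le_antisymm ha.2.2 ha.2.1
    simp only [hprj, ha2, projIcc_left]
    exact F.source (projIcc 0 1 zero_le_one a.1)
  have htopval : ∀ a ∈ (Icc (0:ℝ) 1 ×ˢ Icc (1:ℝ) 1), p (Γ a) = y := by
    intro a ha
    have h2 : a ∈ Icc (0:ℝ) 1 ×ˢ Icc (0:ℝ) 1 := ⟨ha.1, zero_le_one.trans ha.2.1, ha.2.2⟩
    have h5 := hl h2
    simp only [Function.comp_apply] at h5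
    rw [h5, hHdef]
    have ha2 : a.2 = 1 := le_antisymm ha.2.2 ha.2.1
    simp only [hprj, ha2, projIcc_right]
    exact F.target (projIcc 0 1 zero_le_one a.1)
  have hbot : Γ ((1:ℝ), (0:ℝ)) = Γ (0, 0) := by
    refine hp.constOn_of_comp (isPreconnected_Icc.prod isPreconnected_Icc :
        _root_.IsPreconnected (Icc (0:ℝ) 1 ×ˢ Icc (0:ℝ) 0))
      (hc.mono (prod_mono_right (Icc_subset_Icc le_rfl zero_le_one)))
      (fun a ha a' ha' => by rw [hbotval a ha, hbotval a' ha'])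
      ⟨⟨zero_le_one, le_rfl⟩, ⟨le_rfl, le_rfl⟩⟩ ⟨⟨le_rfl, zero_le_one⟩, ⟨le_rfl, le_rfl⟩⟩
  have htop : Γ ((0:ℝ), (1:ℝ)) = Γ (1, 1) := by
    refine hp.constOn_of_comp (isPreconnected_Icc.prod isPreconnected_Icc :
        _root_.IsPreconnected (Icc (0:ℝ) 1 ×ˢ Icc (1:ℝ) 1))
      (hc.mono (prod_mono_right (Icc_subset_Icc zero_le_one le_rfl)))
      (fun a ha a' ha' => by rw [htopval a ha, htopval a' ha'])
      ⟨⟨le_rfl, zero_le_one⟩, ⟨le_rfl, le_rfl⟩⟩ ⟨⟨zero_le_one, le_rfl⟩, ⟨le_rfl, le_rfl⟩⟩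
  have hright : (fun t : I => Γ (1, (t : ℝ))) = Γ₁ := by
    refine hp.eq_of_comp_eq ?_ h₁c ?_ 0 ?_
    · exact hc.comp_continuous (continuous_const.prodMk continuous_subtype_val)
        (fun t => hmem t 1 ⟨zero_le_one, le_rfl⟩)
    · funext t
      have h5 := hl (hmem t 1 ⟨zero_le_one, le_rfl⟩)
      simp only [Function.comp_apply] at h5 ⊢
      rw [h5, hHdef]
      simp only [hprj, projIcc_right, projIcc_val]
      rw [show (⟨(1:ℝ), _⟩ : I) = (1 : I) from rfl]
      rw [F.apply_one t]
      exact (h₁ t).symm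
    · show Γ (1, ((0:I):ℝ)) = Γ₁ 0
      rw [show ((0:I):ℝ) = (0:ℝ) from rfl, hbot, hΓ00, hstart]
  have e1 : Γ₀ 1 = Γ ((0:ℝ), (1:ℝ)) := by rw [← hleft]; simp
  have e2 : Γ₁ 1 = Γ ((1:ℝ), (1:ℝ)) := by rw [← hright]; simp
  rw [e1, e2, htop]

theorem cov_surj (hp : IsCoveringMap p) [Nonempty E] [PreconnectedSpace B] :
    Function.Surjective p := by
  have hclopen : IsClopen (Set.range p) := by
    constructor
    · rw [← isOpen_compl_iff]
      rw [isOpen_iff_forall_mem_open]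
      intro b hb
      refine ⟨baseU hp b, ?_,
        baseU_open hp b, mem_baseU hp b⟩
      intro b₂ hb₂ hmem
      apply hb
      obtain ⟨x, hx⟩ := hmem
      obtain ⟨y, hy⟩ := ((hp b).2.choose_spec.2.2.2.choose
        ⟨x, show p x ∈ baseU hp b from hx ▸ hb₂⟩).2
      exact ⟨y, hy⟩
    · exact hp.isOpenMap.isOpen_range
  have : Set.range p = univ := hclopen.eq_univ (range_nonempty p)
  intro b
  have : b ∈ Set.range p := this ▸ mem_univ b
  exact this


end Stmt16Aux

open Set unitInterval

attribute [local instance] Path.Homotopic.setoid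

/-- If `p : E → B` is a covering map with `E` path-connected, and `f : B' → B` is a
continuous map of path-connected spaces inducing a surjection
`π₁(B', b') → π₁(B, f b')`, then the pullback covering `f*E → B'` is path-connected. -/
theorem stmt_16 {E B B' : Type} [TopologicalSpace E] [TopologicalSpace B]
    [TopologicalSpace B'] (p : E → B) (hp : IsCoveringMap p)
    [PathConnectedSpace B] [PathConnectedSpace B'] [PathConnectedSpace E]
    (f : C(B', B)) (b' : B')
    (hsurj : Function.Surjective
      (Functor.mapAut (FundamentalGroupoid.mk b')
        (FundamentalGroupoid.fundamentalGroupoidFunctor.map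
          (X := TopCat.of B') (Y := TopCat.of B) (TopCat.ofHom f)))) :
    PathConnectedSpace {q : B' × E // f q.1 = p q.2} := by
  haveI : Nonempty E := (inferInstance : PathConnectedSpace E).nonempty
  obtain ⟨e₀, he₀⟩ := Stmt16Aux.cov_surj hp (f b')
  set S := {q : B' × E // f q.1 = p q.2} with hS
  have claim2 : ∀ (e₁ : E) (h1 : f b' = p e₁),
      Joined (⟨(b', e₀), he₀.symm⟩ : S) ⟨(b', e₁), h1⟩ := by
    intro e₁ h1
    obtain ⟨α⟩ : Joined e₀ e₁ := PathConnectedSpace.joined e₀ e₁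
    set β : Path (f b') (f b') := (α.map hp.continuous).cast he₀.symm h1 with hβ
    set F := FundamentalGroupoid.fundamentalGroupoidFunctor.map
      (X := TopCat.of B') (Y := TopCat.of B) (TopCat.ofHom f) with hF
    set d : Aut (F.obj (FundamentalGroupoid.mk b')) :=
      (Groupoid.isoEquivHom _ _).symm
        (show (F.obj (FundamentalGroupoid.mk b')) ⟶ (F.obj (FundamentalGroupoid.mk b')) from
          (⟦β⟧ : Path.Homotopic.Quotient (f b') (f b'))) with hd
    obtain ⟨g, hg⟩ := hsurj d
    obtain ⟨l, hl⟩ := Quotient.exists_rep g.hom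
    have hmap : F.map g.hom = (⟦β⟧ : Path.Homotopic.Quotient (f b') (f b')) := by
      have := congrArg Iso.hom hg
      rwa [show (Functor.mapAut (FundamentalGroupoid.mk b') F g).hom = F.map g.hom from rfl]
        at this
    rw [← hl] at hmap
    have hmap2 : (⟦l.map f.continuous⟧ : Path.Homotopic.Quotient (f b') (f b'))
        = ⟦β⟧ := by
      exact hmap
    have hhom : (l.map f.continuous).Homotopic β := Quotient.exact hmap2
    obtain ⟨Λ, hΛc, hΛp, hΛ0⟩ := Stmt16Aux.path_lift hp (l.map f.continuous) e₀ he₀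
    have hαβ : ∀ t, p (α t) = β t := fun t => by simp [hβ]
    have hend : Λ 1 = e₁ := by
      have := Stmt16Aux.monodromy hp hhom hΛc α.continuous hΛp hαβ
        (by rw [hΛ0, α.source])
      rw [this, α.target]
    have hprop : ∀ t : I, f (l t) = p (Λ t) := fun t => by
      rw [hΛp t]; simp
    exact ⟨⟨⟨fun t => ⟨(l t, Λ t), hprop t⟩,
        (l.continuous.prodMk hΛc).subtype_mk _⟩,
      Subtype.ext (Prod.ext l.source hΛ0),
      Subtype.ext (Prod.ext l.target hend)⟩⟩
  have claim1 : ∀ w : S, ∃ (e₁ : E) (h1 : f b' = p e₁),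
      Joined w (⟨(b', e₁), h1⟩ : S) := by
    rintro ⟨⟨xx, ee⟩, hw⟩
    obtain ⟨γ⟩ : Joined xx b' := PathConnectedSpace.joined xx b'
    obtain ⟨Γ, hΓc, hΓp, hΓ0⟩ := Stmt16Aux.path_lift hp (γ.map f.continuous) ee hw.symm
    have h1 : f b' = p (Γ 1) := by
      rw [hΓp 1, Path.target]
    have hprop : ∀ t : I, f (γ t) = p (Γ t) := fun t => by
      rw [hΓp t]; simp
    exact ⟨Γ 1, h1, ⟨⟨⟨fun t => ⟨(γ t, Γ t), hprop t⟩,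
        (γ.continuous.prodMk hΓc).subtype_mk _⟩,
      Subtype.ext (Prod.ext γ.source hΓ0),
      Subtype.ext (Prod.ext γ.target rfl)⟩⟩⟩
  refine ⟨⟨⟨(b', e₀), he₀.symm⟩⟩, fun a b => ?_⟩
  obtain ⟨e₁, h1, j1⟩ := claim1 a
  obtain ⟨e₂, h2, j2⟩ := claim1 b
  exact (j1.trans (claim2 e₁ h1).symm).trans ((claim2 e₂ h2).trans j2.symm)
end
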